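/- Consider the additive mod-q multiple access channel with feedback: let q ≥ 1, n ≥ 1, let W₁, W₂ (the messages, taking values in finite sets) and V = (V_1,…,V_n) with V_i ∈ ℤ/qℤ be random variables on a common probability space such that V^n is independent of (W₁, W₂); let X_{l,i} = g_{l,i}(W_l, Y^{i−1}) ∈ ℤ/qℤ for deterministic encoding functions g_{l,i} (l = 1,2), and Y_i = X_{1,i} + X_{2,i} + V_i (addition mod q). Then the sum-rate directed information satisfies I((X₁, X₂)^n → Y^n) := ∑_{i=1}^{n} I((X₁^i, X₂^i) ; Y_i | Y^{i−1}) = H(Y^n) − H(V^n). -/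
import Mathlib


open Finset

set_option synthInstance.maxSize 1000

/-- Probability mass of the event `X = a` under the weight function `μ` on the finite
sample space `Ω`. -/
noncomputable def pmass {Ω α : Type*} [Fintype Ω] [DecidableEq α]
    (μ : Ω → ℝ) (X : Ω → α) (a : α) : ℝ := ∑ ω, if X ω = a then μ ω else 0

/-- Shannon entropy (natural logarithm) of the discrete random variable `X` defined on the
finite probability space `(Ω, μ)`. -/
noncomputable def entropy {Ω α : Type*} [Fintype Ω] [Fintype α] [DecidableEq α]
    (μ : Ω → ℝ) (X : Ω → α) : ℝ := ∑ a, Real.negMulLog (pmass μ X a)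

/-- Conditional mutual information `I(X;Y|Z) = H(X,Z) + H(Y,Z) - H(X,Y,Z) - H(Z)`. -/
noncomputable def condMutualInfo {Ω α β γ : Type*} [Fintype Ω]
    [Fintype α] [DecidableEq α] [Fintype β] [DecidableEq β] [Fintype γ] [DecidableEq γ]
    (μ : Ω → ℝ) (X : Ω → α) (Y : Ω → β) (Z : Ω → γ) : ℝ :=
  entropy μ (fun ω => (X ω, Z ω)) + entropy μ (fun ω => (Y ω, Z ω))
    - entropy μ (fun ω => ((X ω, Y ω), Z ω)) - entropy μ Z

/-! ### Auxiliary material -/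

/-- Classical indicator of a proposition, as a real number. -/
noncomputable def chi (P : Prop) : ℝ := @ite ℝ P (Classical.propDecidable P) 1 0

lemma chi_pos {P : Prop} (h : P) : chi P = 1 := if_pos h

lemma chi_neg {P : Prop} (h : ¬ P) : chi P = 0 := if_neg h

lemma chi_congr {P Q : Prop} (h : P ↔ Q) : chi P = chi Q := by
  by_cases hp : P
  · rw [chi_pos hp, chi_pos (h.mp hp)]
  · rw [chi_neg hp, chi_neg (fun hq => hp (h.mpr hq))]

lemma chi_and (P Q : Prop) : chi (P ∧ Q) = chi P * chi Q := by
  by_cases hp : P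
  · by_cases hq : Q
    · rw [chi_pos ⟨hp, hq⟩, chi_pos hp, chi_pos hq]; ring
    · rw [chi_neg (fun h => hq h.2), chi_neg hq]; ring
  · rw [chi_neg (fun h => hp h.1), chi_neg hp]; ring

section helpers

variable {Ω α β : Type*} [Fintype Ω]

lemma negMulLog_mul' (x y : ℝ) :
    Real.negMulLog (x * y) = y * Real.negMulLog x + x * Real.negMulLog y := by
  rcases eq_or_ne x 0 with rfl | hx
  · simp [Real.negMulLog]
  rcases eq_or_ne y 0 with rfl | hy
  · simp [Real.negMulLog]
  simp only [Real.negMulLog, Real.log_mul hx hy]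
  ring

lemma mul_negMulLog_div (x p : ℝ) (hp : p ≠ 0) :
    p * Real.negMulLog (x / p) = Real.negMulLog x - (x / p) * Real.negMulLog p := by
  rcases eq_or_ne x 0 with rfl | hx
  · simp
  simp only [Real.negMulLog, Real.log_div hx hp]
  field_simp
  ring

variable [DecidableEq α] [DecidableEq β]

lemma pmass_nonneg (μ : Ω → ℝ) (hμ0 : ∀ ω, 0 ≤ μ ω) (X : Ω → α) (a : α) :
    0 ≤ pmass μ X a := by
  refine Finset.sum_nonneg fun ω _ => ?_
  split <;> simp [hμ0]

lemma pmass_mono (μ : Ω → ℝ) (hμ0 : ∀ ω, 0 ≤ μ ω) (X : Ω → α) (X' : Ω → β)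
    (a : α) (a' : β) (h : ∀ ω, X ω = a → X' ω = a') :
    pmass μ X a ≤ pmass μ X' a' := by
  refine Finset.sum_le_sum fun ω _ => ?_
  by_cases hx : X ω = a
  · simp [hx, h ω hx]
  · simp only [hx, if_false]
    split <;> simp [hμ0]

lemma pmass_eq_chi (μ : Ω → ℝ) (X : Ω → α) (a : α) :
    pmass μ X a = ∑ ω, chi (X ω = a) * μ ω := by
  refine Finset.sum_congr rfl fun ω _ => ?_
  by_cases h : X ω = a
  · rw [if_pos h, chi_pos h, one_mul]
  · rw [if_neg h, chi_neg h, zero_mul]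

lemma chi_sum_comp (μ : Ω → ℝ) (X : Ω → α) [Fintype α] (P : α → Prop) :
    (∑ ω, chi (P (X ω)) * μ ω) = ∑ a, chi (P a) * pmass μ X a := by
  have h : ∀ a, chi (P a) * pmass μ X a = ∑ ω, chi (P a) * (if X ω = a then μ ω else 0) := by
    intro a
    unfold pmass
    exact Finset.mul_sum _ _ _
  rw [Finset.sum_congr rfl fun a _ => h a, Finset.sum_comm]
  refine Finset.sum_congr rfl fun ω _ => ?_
  have hz : ∀ a ∈ Finset.univ, a ≠ X ω
      → chi (P a) * (if X ω = a then μ ω else 0) = 0 := by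
    intro a _ ha
    rw [if_neg (fun h => ha h.symm), mul_zero]
  rw [Finset.sum_eq_single_of_mem (X ω) (Finset.mem_univ _) hz, if_pos rfl]

lemma pmass_pair_fst (μ : Ω → ℝ) [Fintype β] (X : Ω → α) (T : Ω → β) (a : α) :
    ∑ t, pmass μ (fun ω => (X ω, T ω)) (a, t) = pmass μ X a := by
  unfold pmass
  rw [Finset.sum_comm]
  refine Finset.sum_congr rfl fun ω _ => ?_
  simp [Prod.ext_iff, ite_and, Finset.sum_ite_eq']

lemma entropy_comp_injective (μ : Ω → ℝ) [Fintype α] [Fintype β]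
    (X : Ω → α) (e : α → β) (he : Function.Injective e) :
    entropy μ (fun ω => e (X ω)) = entropy μ X := by
  unfold entropy
  rw [← Finset.sum_subset (Finset.subset_univ (Finset.univ.image e))]
  · rw [Finset.sum_image (fun a _ b _ hab => he hab)]
    refine Finset.sum_congr rfl fun a _ => ?_
    congr 1
    unfold pmass
    exact Finset.sum_congr rfl fun ω _ => by simp [he.eq_iff]
  · intro b _ hb
    have h0 : pmass μ (fun ω => e (X ω)) b = 0 := by
      unfold pmass
      refine Finset.sum_eq_zero fun ω _ => ?_
      have : e (X ω) ≠ b := fun h => hb (by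
        simp only [← h]
        exact Finset.mem_image_of_mem e (Finset.mem_univ (X ω)))
      simp [this]
    simp [h0]

lemma entropy_of_const (μ : Ω → ℝ) (hμ1 : ∑ ω, μ ω = 1) [Fintype α]
    (X : Ω → α) (c : α) (h : ∀ ω, X ω = c) :
    entropy μ X = 0 := by
  unfold entropy
  refine Finset.sum_eq_zero fun a _ => ?_
  by_cases hac : a = c
  · subst hac
    have : pmass μ X a = 1 := by
      unfold pmass
      rw [← hμ1]
      exact Finset.sum_congr rfl fun ω _ => by simp [h ω]
    simp [this, Real.negMulLog]
  · have : pmass μ X a = 0 := by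
      unfold pmass
      refine Finset.sum_eq_zero fun ω _ => ?_
      simp [h ω, Ne.symm hac, hac]
    simp [this]

lemma indep_event_chi (μ : Ω → ℝ) [Fintype α] [Fintype β] (X : Ω → α) (Z : Ω → β)
    (h : ∀ a b, pmass μ (fun ω => (X ω, Z ω)) (a, b) = pmass μ X a * pmass μ Z b)
    (P : α → Prop) (Q : β → Prop) :
    (∑ ω, chi (P (X ω) ∧ Q (Z ω)) * μ ω)
      = (∑ ω, chi (P (X ω)) * μ ω) * (∑ ω, chi (Q (Z ω)) * μ ω) := by
  have h1 : (∑ ω, chi (P (X ω) ∧ Q (Z ω)) * μ ω)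
      = ∑ p : α × β, chi (P p.1 ∧ Q p.2) * pmass μ (fun ω => (X ω, Z ω)) p :=
    chi_sum_comp μ (fun ω => (X ω, Z ω)) (fun p => P p.1 ∧ Q p.2)
  rw [h1, Fintype.sum_prod_type, chi_sum_comp μ X P, chi_sum_comp μ Z Q, Finset.sum_mul]
  refine Finset.sum_congr rfl fun a _ => ?_
  rw [Finset.mul_sum]
  refine Finset.sum_congr rfl fun b _ => ?_
  rw [h a b, chi_and]
  ring

lemma core_entropy {𝒮 𝒯 𝒰 : Type*} [Fintype 𝒮] [DecidableEq 𝒮]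
    [Fintype 𝒯] [DecidableEq 𝒯] [Fintype 𝒰] [DecidableEq 𝒰]
    (μ : Ω → ℝ) (hμ0 : ∀ ω, 0 ≤ μ ω)
    (S : Ω → 𝒮) (T : Ω → 𝒯) (U : Ω → 𝒰) (f : 𝒮 → 𝒰)
    (hU : ∀ ω, U ω = f (S ω))
    (hstar : ∀ s t, pmass μ (fun ω => (S ω, T ω)) (s, t) * pmass μ U (f s)
      = pmass μ S s * pmass μ (fun ω => (U ω, T ω)) (f s, t)) :
    entropy μ (fun ω => (S ω, T ω)) - entropy μ S
      = entropy μ (fun ω => (U ω, T ω)) - entropy μ U := by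
  classical
  set pS := pmass μ S with hpS
  set pU := pmass μ U with hpU
  set pST := pmass μ (fun ω => (S ω, T ω)) with hpST
  set pUT := pmass μ (fun ω => (U ω, T ω)) with hpUT
  have hSle : ∀ s, pS s ≤ pU (f s) := fun s =>
    pmass_mono μ hμ0 S U s (f s) (fun ω h => by rw [hU, h])
  have hSTle : ∀ s t, pST (s, t) ≤ pS s := fun s t =>
    pmass_mono μ hμ0 _ S (s, t) s (fun ω h => by
      simpa using congrArg Prod.fst h)
  have hUTle : ∀ u t, pUT (u, t) ≤ pU u := fun u t =>
    pmass_mono μ hμ0 _ U (u, t) u (fun ω h => by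
      simpa using congrArg Prod.fst h)
  have margUT : ∀ u, ∑ t, pUT (u, t) = pU u := fun u => pmass_pair_fst μ U T u
  set c : 𝒰 → ℝ := fun u => ∑ t, Real.negMulLog (pUT (u, t) / pU u) with hc
  have claim1 : ∀ s, (∑ t, Real.negMulLog (pST (s, t)))
      = Real.negMulLog (pS s) + pS s * c (f s) := by
    intro s
    by_cases hs : pU (f s) = 0
    · have hps : pS s = 0 :=
        le_antisymm (hs ▸ hSle s) (pmass_nonneg μ hμ0 S s)
      have hpst : ∀ t, pST (s, t) = 0 := fun t =>
        le_antisymm (hps ▸ hSTle s t) (pmass_nonneg μ hμ0 _ _)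
      simp [hps, hpst]
    · have hrepr : ∀ t, pST (s, t) = pS s * (pUT (f s, t) / pU (f s)) := by
        intro t
        rw [mul_div_assoc', eq_div_iff hs, hstar s t]
      calc (∑ t, Real.negMulLog (pST (s, t)))
          = ∑ t, ((pUT (f s, t) / pU (f s)) * Real.negMulLog (pS s)
              + pS s * Real.negMulLog (pUT (f s, t) / pU (f s))) := by
            refine Finset.sum_congr rfl fun t _ => ?_
            rw [hrepr t, negMulLog_mul']
        _ = (∑ t, pUT (f s, t) / pU (f s)) * Real.negMulLog (pS s) + pS s * c (f s) := by
            rw [Finset.sum_add_distrib, ← Finset.sum_mul, ← Finset.mul_sum]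
        _ = Real.negMulLog (pS s) + pS s * c (f s) := by
            rw [← Finset.sum_div, margUT, div_self hs, one_mul]
  have claim2 : ∀ u, pU u * c u
      = (∑ t, Real.negMulLog (pUT (u, t))) - Real.negMulLog (pU u) := by
    intro u
    by_cases hu : pU u = 0
    · have hput : ∀ t, pUT (u, t) = 0 := fun t =>
        le_antisymm (hu ▸ hUTle u t) (pmass_nonneg μ hμ0 _ _)
      simp [hu, hc, hput]
    · rw [hc]
      simp only []
      rw [Finset.mul_sum]
      rw [Finset.sum_congr rfl (fun t _ => mul_negMulLog_div (pUT (u, t)) (pU u) hu)]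
      rw [Finset.sum_sub_distrib, ← Finset.sum_mul, ← Finset.sum_div, margUT, div_self hu,
        one_mul]
  have push : (∑ s, pS s * c (f s)) = ∑ u, pU u * c u := by
    have h1 : ∀ (g : 𝒰 → ℝ) (u : 𝒰), pU u * g u
        = ∑ ω, (if f (S ω) = u then μ ω * g u else 0) := by
      intro g u
      rw [hpU]
      unfold pmass
      rw [Finset.sum_mul]
      refine Finset.sum_congr rfl fun ω _ => ?_
      rw [hU ω]
      split <;> simp
    have h2 : ∀ s, pS s * c (f s) = ∑ ω, (if S ω = s then μ ω * c (f (S ω)) else 0) := by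
      intro s
      rw [hpS]
      unfold pmass
      rw [Finset.sum_mul]
      refine Finset.sum_congr rfl fun ω _ => ?_
      by_cases h : S ω = s <;> simp [h]
    have lhs : (∑ s, pS s * c (f s)) = ∑ ω, μ ω * c (f (S ω)) := by
      rw [Finset.sum_congr rfl fun s _ => h2 s, Finset.sum_comm]
      refine Finset.sum_congr rfl fun ω _ => ?_
      simp [Finset.sum_ite_eq']
    have rhs : (∑ u, pU u * c u) = ∑ ω, μ ω * c (f (S ω)) := by
      rw [Finset.sum_congr rfl fun u _ => h1 c u, Finset.sum_comm]
      refine Finset.sum_congr rfl fun ω _ => ?_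
      simp [Finset.sum_ite_eq']
    rw [lhs, rhs]
  have HST : entropy μ (fun ω => (S ω, T ω)) = entropy μ S + ∑ s, pS s * c (f s) := by
    unfold entropy
    rw [Fintype.sum_prod_type, ← Finset.sum_add_distrib]
    exact Finset.sum_congr rfl fun s _ => claim1 s
  have HUT : entropy μ (fun ω => (U ω, T ω)) = entropy μ U + ∑ u, pU u * c u := by
    unfold entropy
    rw [Fintype.sum_prod_type]
    have : ∀ u, (∑ t, Real.negMulLog (pUT (u, t)))
        = Real.negMulLog (pU u) + pU u * c u := by
      intro u
      rw [claim2 u]; ring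
    rw [Finset.sum_congr rfl fun u _ => this u, Finset.sum_add_distrib]
  rw [HST, HUT, push]
  ring

end helpers

set_option maxHeartbeats 2000000 in
/-- For the additive mod-`q` MAC with feedback — output `Y_i = X_{1,i} + X_{2,i} + V_i`
(mod `q`), noise `V^n` independent of the messages `(W₁, W₂)`, and inputs produced by
deterministic encoders `X_{l,i} = g_{l,i}(W_l, Y^{i-1})` — the sum-rate directed
information satisfies
`I((X₁, X₂)^n → Y^n) = ∑_{i=1}^n I((X₁^i, X₂^i); Y_i | Y^{i-1}) = H(Y^n) − H(V^n)`. -/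
theorem additiveMAC_directedInfo_eq_output_entropy_sub_noise_entropy
    {Ω 𝒲₁ 𝒲₂ : Type*} [Fintype Ω]
    [Fintype 𝒲₁] [DecidableEq 𝒲₁] [Nonempty 𝒲₁]
    [Fintype 𝒲₂] [DecidableEq 𝒲₂] [Nonempty 𝒲₂]
    (q : ℕ) [NeZero q] {n : ℕ} (hn : 1 ≤ n)
    (μ : Ω → ℝ) (hμ0 : ∀ ω, 0 ≤ μ ω) (hμ1 : ∑ ω, μ ω = 1)
    (W₁ : Ω → 𝒲₁) (W₂ : Ω → 𝒲₂)
    (V X₁ X₂ Y : Ω → Fin n → ZMod q)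
    (hIndep : ∀ (v : Fin n → ZMod q) (w : 𝒲₁ × 𝒲₂),
      pmass μ (fun ω => (V ω, (W₁ ω, W₂ ω))) (v, w) =
        pmass μ V v * pmass μ (fun ω => (W₁ ω, W₂ ω)) w)
    (hEnc1 : ∀ i : Fin n, ∃ g : 𝒲₁ → (Fin (i : ℕ) → ZMod q) → ZMod q,
      ∀ ω, X₁ ω i = g (W₁ ω) (fun j => Y ω (Fin.castLE i.isLt.le j)))
    (hEnc2 : ∀ i : Fin n, ∃ g : 𝒲₂ → (Fin (i : ℕ) → ZMod q) → ZMod q,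
      ∀ ω, X₂ ω i = g (W₂ ω) (fun j => Y ω (Fin.castLE i.isLt.le j)))
    (hAdd : ∀ ω (i : Fin n), Y ω i = X₁ ω i + X₂ ω i + V ω i) :
    (∑ i : Fin n, condMutualInfo μ
        (fun ω => ((fun j : Fin ((i : ℕ) + 1) => X₁ ω (Fin.castLE i.isLt j)),
                   (fun j : Fin ((i : ℕ) + 1) => X₂ ω (Fin.castLE i.isLt j))))
        (fun ω => Y ω i)
        (fun ω => fun j : Fin (i : ℕ) => Y ω (Fin.castLE i.isLt.le j))) =
      entropy μ Y - entropy μ V := by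
  classical
  choose g₁ hg₁ using hEnc1
  choose g₂ hg₂ using hEnc2
  -- the prefix of Y is a deterministic function of the messages and the noise prefix
  have traj : ∀ m (hm : m ≤ n), ∃ G : (𝒲₁ × 𝒲₂) → (Fin m → ZMod q) → (Fin m → ZMod q),
      ∀ ω, (fun j : Fin m => Y ω (Fin.castLE hm j))
        = G (W₁ ω, W₂ ω) (fun j => V ω (Fin.castLE hm j)) := by
    intro m
    induction m with
    | zero =>
      intro hm
      exact ⟨fun _ _ => (fun j => j.elim0), fun ω => funext fun j => j.elim0⟩
    | succ m ih =>
      intro hm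
      have hm' : m ≤ n := Nat.le_of_succ_le hm
      obtain ⟨G, hG⟩ := ih hm'
      refine ⟨fun w v => Fin.snoc (G w (Fin.init v))
        (g₁ ⟨m, hm⟩ w.1 (G w (Fin.init v)) + g₂ ⟨m, hm⟩ w.2 (G w (Fin.init v))
          + v (Fin.last m)), ?_⟩
      intro ω
      have hinit : Fin.init (fun j : Fin (m + 1) => V ω (Fin.castLE hm j))
          = fun j : Fin m => V ω (Fin.castLE hm' j) := by
        funext j
        simp only [Fin.init]
        exact congrArg (V ω) (Fin.ext (by simp))
      have hGA : G (W₁ ω, W₂ ω) (Fin.init fun j : Fin (m + 1) => V ω (Fin.castLE hm j))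
          = fun j : Fin m => Y ω (Fin.castLE hm' j) := by
        rw [hinit]; exact (hG ω).symm
      funext j
      refine Fin.lastCases ?_ ?_ j
      · simp only [Fin.snoc_last, hGA]
        have hidx : Fin.castLE hm (Fin.last m) = (⟨m, hm⟩ : Fin n) := Fin.ext (by simp)
        rw [hidx, hAdd ω ⟨m, hm⟩, hg₁ ⟨m, hm⟩ ω, hg₂ ⟨m, hm⟩ ω]
      · intro j₀
        simp only [Fin.snoc_castSucc, hGA]
        exact congrArg (Y ω) (Fin.ext (by simp))
  -- entropies of prefixes
  set F : ℕ → ℝ := fun m => if hm : m ≤ n then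
    entropy μ (fun ω => fun j : Fin m => Y ω (Fin.castLE hm j)) else 0 with hF
  set FV : ℕ → ℝ := fun m => if hm : m ≤ n then
    entropy μ (fun ω => fun j : Fin m => V ω (Fin.castLE hm j)) else 0 with hFV
  have key : ∀ i : Fin n, condMutualInfo μ
        (fun ω => ((fun j : Fin ((i : ℕ) + 1) => X₁ ω (Fin.castLE i.isLt j)),
                   (fun j : Fin ((i : ℕ) + 1) => X₂ ω (Fin.castLE i.isLt j))))
        (fun ω => Y ω i)
        (fun ω => fun j : Fin (i : ℕ) => Y ω (Fin.castLE i.isLt.le j))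
      = (F ((i : ℕ) + 1) - F (i : ℕ)) - (FV ((i : ℕ) + 1) - FV (i : ℕ)) := by
    intro i
    -- abbreviations (written out fully to keep terms syntactically canonical)
    obtain ⟨GY, hGY⟩ := traj (i : ℕ) i.isLt.le
    set S : Ω → (((Fin ((i : ℕ) + 1) → ZMod q) × (Fin ((i : ℕ) + 1) → ZMod q))
        × (Fin (i : ℕ) → ZMod q)) := fun ω =>
      (((fun j : Fin ((i : ℕ) + 1) => X₁ ω (Fin.castLE i.isLt j)),
        (fun j : Fin ((i : ℕ) + 1) => X₂ ω (Fin.castLE i.isLt j))),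
       fun j : Fin (i : ℕ) => Y ω (Fin.castLE i.isLt.le j)) with hS
    set f : (((Fin ((i : ℕ) + 1) → ZMod q) × (Fin ((i : ℕ) + 1) → ZMod q))
        × (Fin (i : ℕ) → ZMod q)) → (Fin (i : ℕ) → ZMod q) := fun s =>
      fun j => s.2 j - s.1.1 (Fin.castSucc j) - s.1.2 (Fin.castSucc j) with hf
    have hUf : ∀ ω, (fun j : Fin (i : ℕ) => V ω (Fin.castLE i.isLt.le j)) = f (S ω) := by
      intro ω
      funext j
      show V ω (Fin.castLE i.isLt.le j)
        = Y ω (Fin.castLE i.isLt.le j) - X₁ ω (Fin.castLE i.isLt (Fin.castSucc j))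
          - X₂ ω (Fin.castLE i.isLt (Fin.castSucc j))
      have e1 : Fin.castLE i.isLt (Fin.castSucc j) = Fin.castLE i.isLt.le j :=
        Fin.ext (by simp)
      rw [e1, hAdd ω (Fin.castLE i.isLt.le j)]
      ring
    -- S is a deterministic function of the messages and the noise prefix
    set GS : (𝒲₁ × 𝒲₂) → (Fin (i : ℕ) → ZMod q)
        → (((Fin ((i : ℕ) + 1) → ZMod q) × (Fin ((i : ℕ) + 1) → ZMod q))
            × (Fin (i : ℕ) → ZMod q)) := fun w v =>
      (((fun j : Fin ((i : ℕ) + 1) => g₁ (Fin.castLE i.isLt j) w.1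
          (fun j' : Fin ((j : ℕ)) => GY w v (Fin.castLE (Nat.lt_succ_iff.mp j.isLt) j'))),
        (fun j : Fin ((i : ℕ) + 1) => g₂ (Fin.castLE i.isLt j) w.2
          (fun j' : Fin ((j : ℕ)) => GY w v (Fin.castLE (Nat.lt_succ_iff.mp j.isLt) j')))),
       GY w v) with hGSdef
    have hprefix : ∀ ω (j : Fin ((i : ℕ) + 1)),
        (fun j' : Fin ((j : ℕ)) => Y ω (Fin.castLE (Fin.castLE i.isLt j).isLt.le j'))
          = fun j' : Fin ((j : ℕ)) => GY (W₁ ω, W₂ ω)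
              (fun j₀ : Fin (i : ℕ) => V ω (Fin.castLE i.isLt.le j₀))
              (Fin.castLE (Nat.lt_succ_iff.mp j.isLt) j') := by
      intro ω j
      funext j'
      rw [← hGY ω]
      exact congrArg (Y ω) (Fin.ext (by simp))
    have hSGS : ∀ ω, S ω = GS (W₁ ω, W₂ ω)
        (fun j : Fin (i : ℕ) => V ω (Fin.castLE i.isLt.le j)) := by
      intro ω
      rw [hS, hGSdef]
      refine Prod.ext (Prod.ext ?_ ?_) ?_
      · funext j
        show X₁ ω (Fin.castLE i.isLt j) = _
        rw [hg₁ (Fin.castLE i.isLt j) ω]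
        exact congrArg _ (hprefix ω j)
      · funext j
        show X₂ ω (Fin.castLE i.isLt j) = _
        rw [hg₂ (Fin.castLE i.isLt j) ω]
        exact congrArg _ (hprefix ω j)
      · exact hGY ω
    -- the key product identity for pmass
    have hstar : ∀ s t, pmass μ (fun ω => (S ω, V ω i)) (s, t)
          * pmass μ (fun ω => fun j : Fin (i : ℕ) => V ω (Fin.castLE i.isLt.le j)) (f s)
        = pmass μ S s * pmass μ
            (fun ω => ((fun j : Fin (i : ℕ) => V ω (Fin.castLE i.isLt.le j)), V ω i))
            (f s, t) := by
      intro s t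
      have hE1 : ∀ ω, (S ω = s) ↔
          (((fun j : Fin (i : ℕ) => V ω (Fin.castLE i.isLt.le j)) = f s)
            ∧ GS (W₁ ω, W₂ ω) (f s) = s) := by
        intro ω
        constructor
        · intro h
          have h1 : (fun j : Fin (i : ℕ) => V ω (Fin.castLE i.isLt.le j)) = f s := by
            rw [hUf ω, h]
          exact ⟨h1, by rw [← h1, ← hSGS ω]; exact h⟩
        · rintro ⟨h1, h2⟩
          rw [hSGS ω, h1]
          exact h2
      have hE2 : ∀ ω, ((S ω, V ω i) = (s, t)) ↔
          ((((fun j : Fin (i : ℕ) => V ω (Fin.castLE i.isLt.le j)) = f s) ∧ V ω i = t)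
            ∧ GS (W₁ ω, W₂ ω) (f s) = s) := by
        intro ω
        rw [Prod.ext_iff]
        constructor
        · rintro ⟨h, hv⟩
          rcases (hE1 ω).mp h with ⟨h1, h2⟩
          exact ⟨⟨h1, hv⟩, h2⟩
        · rintro ⟨⟨h1, hv⟩, h2⟩
          exact ⟨(hE1 ω).mpr ⟨h1, h2⟩, hv⟩
      have eqST : pmass μ (fun ω => (S ω, V ω i)) (s, t)
          = (∑ ω, chi ((fun j : Fin (i : ℕ) => V ω (Fin.castLE i.isLt.le j)) = f s
                ∧ V ω i = t) * μ ω)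
            * (∑ ω, chi (GS (W₁ ω, W₂ ω) (f s) = s) * μ ω) := by
        calc pmass μ (fun ω => (S ω, V ω i)) (s, t)
            = ∑ ω, chi ((S ω, V ω i) = (s, t)) * μ ω := pmass_eq_chi μ _ _
          _ = ∑ ω, chi ((((fun j : Fin (i : ℕ) => V ω (Fin.castLE i.isLt.le j)) = f s)
                ∧ V ω i = t) ∧ GS (W₁ ω, W₂ ω) (f s) = s) * μ ω :=
              Finset.sum_congr rfl fun ω _ => by rw [chi_congr (hE2 ω)]
          _ = _ := indep_event_chi μ V (fun ω => (W₁ ω, W₂ ω)) hIndep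
              (fun v => ((fun j : Fin (i : ℕ) => v (Fin.castLE i.isLt.le j)) = f s
                ∧ v i = t))
              (fun w => GS w (f s) = s)
      have eqS : pmass μ S s
          = (∑ ω, chi ((fun j : Fin (i : ℕ) => V ω (Fin.castLE i.isLt.le j)) = f s) * μ ω)
            * (∑ ω, chi (GS (W₁ ω, W₂ ω) (f s) = s) * μ ω) := by
        calc pmass μ S s
            = ∑ ω, chi (S ω = s) * μ ω := pmass_eq_chi μ _ _
          _ = ∑ ω, chi (((fun j : Fin (i : ℕ) => V ω (Fin.castLE i.isLt.le j)) = f s)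
                ∧ GS (W₁ ω, W₂ ω) (f s) = s) * μ ω :=
              Finset.sum_congr rfl fun ω _ => by rw [chi_congr (hE1 ω)]
          _ = _ := indep_event_chi μ V (fun ω => (W₁ ω, W₂ ω)) hIndep
              (fun v => (fun j : Fin (i : ℕ) => v (Fin.castLE i.isLt.le j)) = f s)
              (fun w => GS w (f s) = s)
      have eqU : pmass μ (fun ω => fun j : Fin (i : ℕ) => V ω (Fin.castLE i.isLt.le j)) (f s)
          = ∑ ω, chi ((fun j : Fin (i : ℕ) => V ω (Fin.castLE i.isLt.le j)) = f s) * μ ω :=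
        pmass_eq_chi μ _ _
      have eqUT : pmass μ
            (fun ω => ((fun j : Fin (i : ℕ) => V ω (Fin.castLE i.isLt.le j)), V ω i))
            (f s, t)
          = ∑ ω, chi ((fun j : Fin (i : ℕ) => V ω (Fin.castLE i.isLt.le j)) = f s
              ∧ V ω i = t) * μ ω := by
        rw [pmass_eq_chi μ _ _]
        exact Finset.sum_congr rfl fun ω _ => by rw [chi_congr Prod.ext_iff]
      rw [eqST, eqS, eqU, eqUT]
      ring
    -- the core identity
    have eqcore := core_entropy μ hμ0 S (fun ω => V ω i)
      (fun ω => fun j : Fin (i : ℕ) => V ω (Fin.castLE i.isLt.le j)) f hUf hstar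
    -- bijective repackagings of entropies
    have stepB : entropy μ (fun ω =>
          (Y ω i, fun j : Fin (i : ℕ) => Y ω (Fin.castLE i.isLt.le j)))
        = entropy μ (fun ω => fun j : Fin ((i : ℕ) + 1) => Y ω (Fin.castLE i.isLt j)) := by
      have he : Function.Injective (fun y : Fin ((i : ℕ) + 1) → ZMod q =>
          (y (Fin.last (i : ℕ)), fun j : Fin (i : ℕ) => y (Fin.castSucc j))) := by
        intro y y' h
        funext j
        refine Fin.lastCases ?_ ?_ j
        · exact congrArg Prod.fst h
        · intro j₀
          exact congrFun (congrArg Prod.snd h) j₀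
      have hpt : (fun ω =>
            (Y ω i, fun j : Fin (i : ℕ) => Y ω (Fin.castLE i.isLt.le j)))
          = fun ω => (fun y : Fin ((i : ℕ) + 1) → ZMod q =>
              (y (Fin.last (i : ℕ)), fun j : Fin (i : ℕ) => y (Fin.castSucc j)))
            (fun j : Fin ((i : ℕ) + 1) => Y ω (Fin.castLE i.isLt j)) := by
        funext ω
        refine Prod.ext ?_ ?_
        · exact congrArg (Y ω) (Fin.ext (by simp))
        · funext j
          exact congrArg (Y ω) (Fin.ext (by simp))
      rw [hpt]
      exact entropy_comp_injective μ
        (fun ω => fun j : Fin ((i : ℕ) + 1) => Y ω (Fin.castLE i.isLt j))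
        (fun y : Fin ((i : ℕ) + 1) → ZMod q =>
          (y (Fin.last (i : ℕ)), fun j : Fin (i : ℕ) => y (Fin.castSucc j))) he
    have stepV : entropy μ (fun ω =>
          ((fun j : Fin (i : ℕ) => V ω (Fin.castLE i.isLt.le j)), V ω i))
        = entropy μ (fun ω => fun j : Fin ((i : ℕ) + 1) => V ω (Fin.castLE i.isLt j)) := by
      have he : Function.Injective (fun y : Fin ((i : ℕ) + 1) → ZMod q =>
          ((fun j : Fin (i : ℕ) => y (Fin.castSucc j)), y (Fin.last (i : ℕ)))) := by
        intro y y' h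
        funext j
        refine Fin.lastCases ?_ ?_ j
        · exact congrArg Prod.snd h
        · intro j₀
          exact congrFun (congrArg Prod.fst h) j₀
      have hpt : (fun ω =>
            ((fun j : Fin (i : ℕ) => V ω (Fin.castLE i.isLt.le j)), V ω i))
          = fun ω => (fun y : Fin ((i : ℕ) + 1) → ZMod q =>
              ((fun j : Fin (i : ℕ) => y (Fin.castSucc j)), y (Fin.last (i : ℕ))))
            (fun j : Fin ((i : ℕ) + 1) => V ω (Fin.castLE i.isLt j)) := by
        funext ω
        refine Prod.ext ?_ ?_
        · funext j
          exact congrArg (V ω) (Fin.ext (by simp))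
        · exact congrArg (V ω) (Fin.ext (by simp))
      rw [hpt]
      exact entropy_comp_injective μ
        (fun ω => fun j : Fin ((i : ℕ) + 1) => V ω (Fin.castLE i.isLt j))
        (fun y : Fin ((i : ℕ) + 1) → ZMod q =>
          ((fun j : Fin (i : ℕ) => y (Fin.castSucc j)), y (Fin.last (i : ℕ)))) he
    have step2 : entropy μ (fun ω => (S ω, V ω i))
        = entropy μ (fun ω =>
            ((((fun j : Fin ((i : ℕ) + 1) => X₁ ω (Fin.castLE i.isLt j)),
               (fun j : Fin ((i : ℕ) + 1) => X₂ ω (Fin.castLE i.isLt j))), Y ω i),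
             fun j : Fin (i : ℕ) => Y ω (Fin.castLE i.isLt.le j))) := by
      have he : Function.Injective (fun p :
          (((Fin ((i : ℕ) + 1) → ZMod q) × (Fin ((i : ℕ) + 1) → ZMod q)) × ZMod q)
            × (Fin (i : ℕ) → ZMod q) =>
          ((p.1.1, p.2), p.1.2 - p.1.1.1 (Fin.last (i : ℕ)) - p.1.1.2 (Fin.last (i : ℕ)))) := by
        intro p p' h
        have h11 : p.1.1 = p'.1.1 := congrArg (fun r => r.1.1) h
        have h2 : p.2 = p'.2 := congrArg (fun r => r.1.2) h
        have h12 : p.1.2 - p.1.1.1 (Fin.last (i : ℕ)) - p.1.1.2 (Fin.last (i : ℕ))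
            = p'.1.2 - p'.1.1.1 (Fin.last (i : ℕ)) - p'.1.1.2 (Fin.last (i : ℕ)) :=
          congrArg Prod.snd h
        rw [h11] at h12
        have h12' : p.1.2 = p'.1.2 := by
          have := sub_left_injective (sub_left_injective h12)
          exact this
        exact Prod.ext (Prod.ext h11 h12') h2
      have hpt : (fun ω => (S ω, V ω i))
          = fun ω => (fun p :
              (((Fin ((i : ℕ) + 1) → ZMod q) × (Fin ((i : ℕ) + 1) → ZMod q)) × ZMod q)
                × (Fin (i : ℕ) → ZMod q) =>
              ((p.1.1, p.2), p.1.2 - p.1.1.1 (Fin.last (i : ℕ)) - p.1.1.2 (Fin.last (i : ℕ))))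
            ((((fun j : Fin ((i : ℕ) + 1) => X₁ ω (Fin.castLE i.isLt j)),
               (fun j : Fin ((i : ℕ) + 1) => X₂ ω (Fin.castLE i.isLt j))), Y ω i),
             fun j : Fin (i : ℕ) => Y ω (Fin.castLE i.isLt.le j)) := by
        funext ω
        refine Prod.ext rfl ?_
        show V ω i = Y ω i - X₁ ω (Fin.castLE i.isLt (Fin.last (i : ℕ)))
          - X₂ ω (Fin.castLE i.isLt (Fin.last (i : ℕ)))
        have e1 : Fin.castLE i.isLt (Fin.last (i : ℕ)) = i := Fin.ext (by simp)
        rw [e1, hAdd ω i]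
        ring
      rw [hpt]
      exact entropy_comp_injective μ
        (fun ω =>
          ((((fun j : Fin ((i : ℕ) + 1) => X₁ ω (Fin.castLE i.isLt j)),
             (fun j : Fin ((i : ℕ) + 1) => X₂ ω (Fin.castLE i.isLt j))), Y ω i),
           fun j : Fin (i : ℕ) => Y ω (Fin.castLE i.isLt.le j)))
        (fun p :
            (((Fin ((i : ℕ) + 1) → ZMod q) × (Fin ((i : ℕ) + 1) → ZMod q)) × ZMod q)
              × (Fin (i : ℕ) → ZMod q) =>
          ((p.1.1, p.2), p.1.2 - p.1.1.1 (Fin.last (i : ℕ)) - p.1.1.2 (Fin.last (i : ℕ)))) he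
    -- values of F and FV
    have hF1 : F ((i : ℕ) + 1)
        = entropy μ (fun ω => fun j : Fin ((i : ℕ) + 1) => Y ω (Fin.castLE i.isLt j)) := by
      rw [hF]
      exact dif_pos i.isLt
    have hF0 : F (i : ℕ)
        = entropy μ (fun ω => fun j : Fin (i : ℕ) => Y ω (Fin.castLE i.isLt.le j)) := by
      rw [hF]
      exact dif_pos i.isLt.le
    have hFV1 : FV ((i : ℕ) + 1)
        = entropy μ (fun ω => fun j : Fin ((i : ℕ) + 1) => V ω (Fin.castLE i.isLt j)) := by
      rw [hFV]
      exact dif_pos i.isLt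
    have hFV0 : FV (i : ℕ)
        = entropy μ (fun ω => fun j : Fin (i : ℕ) => V ω (Fin.castLE i.isLt.le j)) := by
      rw [hFV]
      exact dif_pos i.isLt.le
    -- assemble
    unfold condMutualInfo
    show entropy μ S
        + entropy μ (fun ω => (Y ω i, fun j : Fin (i : ℕ) => Y ω (Fin.castLE i.isLt.le j)))
        - entropy μ (fun ω =>
            ((((fun j : Fin ((i : ℕ) + 1) => X₁ ω (Fin.castLE i.isLt j)),
               (fun j : Fin ((i : ℕ) + 1) => X₂ ω (Fin.castLE i.isLt j))), Y ω i),
             fun j : Fin (i : ℕ) => Y ω (Fin.castLE i.isLt.le j)))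
        - entropy μ (fun ω => fun j : Fin (i : ℕ) => Y ω (Fin.castLE i.isLt.le j))
      = (F ((i : ℕ) + 1) - F (i : ℕ)) - (FV ((i : ℕ) + 1) - FV (i : ℕ))
    rw [stepB, ← step2, hF1, hF0, hFV1, hFV0]
    rw [stepV] at eqcore
    linarith [eqcore]
  rw [Finset.sum_congr rfl fun i _ => key i]
  rw [Fin.sum_univ_eq_sum_range
    (fun m => (F (m + 1) - F m) - (FV (m + 1) - FV m)) n]
  rw [Finset.sum_sub_distrib, Finset.sum_range_sub F, Finset.sum_range_sub FV]
  have hFn : F n = entropy μ Y := by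
    simp only [hF]
    rw [dif_pos (le_refl n)]
    congr 1
  have hFVn : FV n = entropy μ V := by
    simp only [hFV]
    rw [dif_pos (le_refl n)]
    congr 1
  have hF0 : F 0 = 0 := by
    simp only [hF]
    rw [dif_pos (Nat.zero_le n)]
    exact entropy_of_const μ hμ1 _ (fun j : Fin 0 => j.elim0) (fun ω => funext fun j => j.elim0)
  have hFV0 : FV 0 = 0 := by
    simp only [hFV]
    rw [dif_pos (Nat.zero_le n)]
    exact entropy_of_const μ hμ1 _ (fun j : Fin 0 => j.elim0) (fun ω => funext fun j => j.elim0)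
  rw [hFn, hFVn, hF0, hFV0]
  ring
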